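/- Under the sensor setup, posterior definitions with ΔQ = 0, and network setup: (1) if ΔR_j ⪰ 0 for all j, then with the unit fusion weights a_j = 1 for all j (the limit of the weights a_j^{(L)} = N·[𝓛^L]_{ij} as L → ∞) one has Σ ⪯ Σ^t ⪯ Σ^f; (2) if ΔR_j ⪯ 0 for all j, then with the unit fusion weights one has Σ^f ⪯ Σ ⪯ Σ^t; (3) if ΔR_j = 0 for all j, then Σ^f = Σ for any nonnegative weights, and Σ^{t(L)} − Σ^{(L)} converges entrywise to the zero matrix as L → ∞. (Theorem 4 of the paper, with the asymptotic inequalities stated at the limiting unit weights.) -/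

import Mathlib

open Matrix Filter Finset
section Aux

/-- conjugation of a PSD matrix by any matrix (real case, transpose form). -/
lemma psd_conj {m k : Type*} [Fintype m] [Fintype k] [DecidableEq m] [DecidableEq k]
    {A : Matrix m m ℝ} (hA : A.PosSemidef) (B : Matrix k m ℝ) :
    (B * A * Bᵀ).PosSemidef := by
  have := hA.mul_mul_conjTranspose_same B
  rwa [conjTranspose_eq_transpose_of_trivial] at this

lemma psd_smul {k : Type*} [Fintype k] [DecidableEq k] {M : Matrix k k ℝ}
    (hM : M.PosSemidef) {c : ℝ} (hc : 0 ≤ c) : (c • M).PosSemidef := by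
  refine ⟨?_, fun x => ?_⟩
  · show (c • M)ᴴ = c • M
    rw [conjTranspose_smul, star_trivial, hM.1.eq]
  · exact (hM.smul hc).2 x

lemma psd_symm {k : Type*} [Fintype k] {M : Matrix k k ℝ} (hM : M.PosSemidef) :
    Mᵀ = M := by
  have := hM.1.eq
  rwa [conjTranspose_eq_transpose_of_trivial] at this

/-- `A ⪯ B` for positive definite symmetric matrices implies `B⁻¹ ⪯ A⁻¹`. -/
lemma inv_sub_inv_psd {k : Type*} [Fintype k] [DecidableEq k]
    {A B : Matrix k k ℝ} (hA : A.PosDef) (hB : B.PosDef)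
    (hD : (B - A).PosSemidef) : (A⁻¹ - B⁻¹).PosSemidef := by
  have hAu : IsUnit A.det := hA.det_pos.ne'.isUnit
  have hBu : IsUnit B.det := hB.det_pos.ne'.isUnit
  set D := B - A with hDdef
  have hDs : Dᵀ = D := psd_symm hD
  have hBs : Bᵀ = B := psd_symm hB.posSemidef
  have hBinvs : (B⁻¹)ᵀ = B⁻¹ := by rw [transpose_nonsing_inv, hBs]
  have e1 : B⁻¹ * D * A⁻¹ = A⁻¹ - B⁻¹ := by
    rw [hDdef, mul_sub, sub_mul, Matrix.nonsing_inv_mul B hBu,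
      mul_assoc, Matrix.mul_nonsing_inv A hAu, mul_one, one_mul]
  have e2 : B⁻¹ * D * B⁻¹ + B⁻¹ * D * A⁻¹ * D * B⁻¹ = A⁻¹ - B⁻¹ := by
    have h3 : B⁻¹ * D * B⁻¹ = B⁻¹ * D * A⁻¹ * A * B⁻¹ := by
      rw [mul_assoc (B⁻¹ * D) A⁻¹ A, Matrix.nonsing_inv_mul A hAu, mul_one]
    rw [h3, ← add_mul, ← mul_add]
    have h4 : A + D = B := by rw [hDdef]; abel
    rw [h4, mul_assoc (B⁻¹ * D * A⁻¹) B B⁻¹, Matrix.mul_nonsing_inv B hBu, mul_one, e1]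
  rw [← e2]
  have p1 : (B⁻¹ * D * B⁻¹).PosSemidef := by
    have := psd_conj hD B⁻¹
    rwa [hBinvs] at this
  have p2 : (B⁻¹ * D * A⁻¹ * D * B⁻¹).PosSemidef := by
    have := psd_conj hA.inv.posSemidef (B⁻¹ * D)
    rwa [transpose_mul, hDs, hBinvs, ← mul_assoc] at this
  exact p1.add p2

lemma psd_entry_abs_le {k : Type*} [Fintype k] [DecidableEq k]
    {M : Matrix k k ℝ} (hM : M.PosSemidef) (p q : k) :
    |M p q| ≤ (M p p + M q q) / 2 := by
  have hsym : M q p = M p q := by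
    have := congrFun (congrFun hM.1 p) q
    simpa [conjTranspose_apply] using this
  have key : ∀ c : ℝ, 0 ≤ M p p + c * M q p + (M p q * c + c * (M q q * c)) := by
    intro c
    have h := hM.dotProduct_mulVec_nonneg (Pi.single p 1 + Pi.single q c)
    rw [star_trivial] at h
    simp [mulVec_add, mulVec_single, add_dotProduct, single_dotProduct, Pi.add_apply] at h
    linarith
  have h1 := key 1
  have h2 := key (-1)
  rw [hsym] at h1 h2
  rw [abs_le]
  constructor <;> nlinarith

end Aux

section Markov

/-- oscillation contraction for a row-stochastic matrix with entries ≥ δ. -/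
lemma osc_contract {N : ℕ} [NeZero N] (A : Matrix (Fin N) (Fin N) ℝ) (δ : ℝ)
    (hδ : 0 ≤ δ) (hA : ∀ p q, δ ≤ A p q) (hrowA : ∀ p, ∑ q, A p q = 1)
    (v : Fin N → ℝ) :
    Finset.univ.sup' Finset.univ_nonempty (A.mulVec v)
      - Finset.univ.inf' Finset.univ_nonempty (A.mulVec v)
      ≤ (1 - N * δ) *
        (Finset.univ.sup' Finset.univ_nonempty v
          - Finset.univ.inf' Finset.univ_nonempty v) := by
  set S := Finset.univ.sup' Finset.univ_nonempty v with hS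
  set I := Finset.univ.inf' Finset.univ_nonempty v with hI
  have hsumδ : ∀ p, ∑ q, (A p q - δ) = 1 - N * δ := by
    intro p
    rw [Finset.sum_sub_distrib, hrowA p, Finset.sum_const, Finset.card_univ,
      Fintype.card_fin, nsmul_eq_mul]
  have key : ∀ p r, A.mulVec v p - A.mulVec v r ≤ (1 - N * δ) * (S - I) := by
    intro p r
    have hup : A.mulVec v p ≤ (∑ q, (A p q - δ) * S) + δ * ∑ q, v q := by
      have : A.mulVec v p = (∑ q, (A p q - δ) * v q) + δ * ∑ q, v q := by
        simp only [Matrix.mulVec, dotProduct, sub_mul, Finset.sum_sub_distrib,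
          Finset.mul_sum]
        ring
      rw [this]
      gcongr with q _
      · exact sub_nonneg.2 (hA p q)
      · exact Finset.le_sup' v (Finset.mem_univ q)
    have hdown : (∑ q, (A r q - δ) * I) + δ * ∑ q, v q ≤ A.mulVec v r := by
      have : A.mulVec v r = (∑ q, (A r q - δ) * v q) + δ * ∑ q, v q := by
        simp only [Matrix.mulVec, dotProduct, sub_mul, Finset.sum_sub_distrib,
          Finset.mul_sum]
        ring
      rw [this]
      gcongr with q _
      · exact sub_nonneg.2 (hA r q)
      · exact Finset.inf'_le v (Finset.mem_univ q)
    have e1 : (∑ q, (A p q - δ) * S) = (1 - N * δ) * S := by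
      rw [← Finset.sum_mul, hsumδ]
    have e2 : (∑ q, (A r q - δ) * I) = (1 - N * δ) * I := by
      rw [← Finset.sum_mul, hsumδ]
    rw [e1] at hup; rw [e2] at hdown
    have := sub_le_sub hup hdown
    calc A.mulVec v p - A.mulVec v r
        ≤ (1 - N * δ) * S + δ * ∑ q, v q - ((1 - N * δ) * I + δ * ∑ q, v q) := this
      _ = (1 - N * δ) * (S - I) := by ring
  obtain ⟨p0, -, hp0⟩ := Finset.exists_mem_eq_sup' Finset.univ_nonempty (A.mulVec v)
  obtain ⟨r0, -, hr0⟩ := Finset.exists_mem_eq_inf' Finset.univ_nonempty (A.mulVec v)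
  rw [hp0, hr0]
  exact key p0 r0

/-- Powers of a primitive doubly stochastic matrix converge to the uniform matrix. -/
lemma markov_conv {N : ℕ} (hN : 1 ≤ N) (W : Matrix (Fin N) (Fin N) ℝ)
    (hnonneg : ∀ p q, 0 ≤ W p q) (hrow : ∀ p, ∑ q, W p q = 1)
    (hcol : ∀ q, ∑ p, W p q = 1) (hdiag : ∀ p, 0 < W p p)
    (hconn : ∀ p q, ∃ m : ℕ, 0 < (W ^ m) p q) (i j : Fin N) :
    Tendsto (fun L : ℕ => (W ^ L) i j) atTop (nhds (1 / N)) := by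
  haveI : NeZero N := ⟨by omega⟩
  have hNR : (0 : ℝ) < N := by positivity
  -- entries of powers are nonnegative
  have hpn : ∀ m p q, 0 ≤ (W ^ m) p q := by
    intro m
    induction m with
    | zero => intro p q; rw [pow_zero]; by_cases h : p = q <;> simp [Matrix.one_apply, h]
    | succ m ih =>
      intro p q
      rw [pow_succ, Matrix.mul_apply]
      exact Finset.sum_nonneg fun r _ => mul_nonneg (ih p r) (hnonneg r q)
  -- row sums of powers are one
  have hrow' : ∀ m p, ∑ q, (W ^ m) p q = 1 := by
    intro m
    induction m with
    | zero => intro p; simp [Matrix.one_apply]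
    | succ m ih =>
      intro p
      simp only [pow_succ, Matrix.mul_apply]
      rw [Finset.sum_comm]
      calc (∑ r, ∑ q, (W ^ m) p r * W r q) = ∑ r, (W ^ m) p r * ∑ q, W r q := by
            simp [Finset.mul_sum]
        _ = 1 := by simp [hrow, ih]
  -- column sums of powers are one
  have hcol' : ∀ m q, ∑ p, (W ^ m) p q = 1 := by
    intro m
    induction m with
    | zero => intro q; simp [Matrix.one_apply]
    | succ m ih =>
      intro q
      simp only [pow_succ', Matrix.mul_apply]
      rw [Finset.sum_comm]
      calc (∑ r, ∑ p, W p r * (W ^ m) r q) = ∑ r, (∑ p, W p r) * (W ^ m) r q := by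
            simp [Finset.sum_mul]
        _ = 1 := by simp [hcol, ih]
  -- positivity of entries propagates to higher powers
  have hstep : ∀ m p q, 0 < (W ^ m) p q → 0 < (W ^ (m + 1)) p q := by
    intro m p q h
    rw [pow_succ, Matrix.mul_apply]
    calc (0:ℝ) < (W ^ m) p q * W q q := mul_pos h (hdiag q)
      _ ≤ ∑ r, (W ^ m) p r * W r q :=
          Finset.single_le_sum (f := fun r => (W ^ m) p r * W r q)
            (fun r _ => mul_nonneg (hpn m p r) (hnonneg r q)) (Finset.mem_univ q)
  have hmono : ∀ p q m m', m ≤ m' → 0 < (W ^ m) p q → 0 < (W ^ m') p q := by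
    intro p q m m' h hpos
    induction m', h using Nat.le_induction with
    | base => exact hpos
    | succ k hk ih => exact hstep k p q ih
  -- a power with all entries positive
  obtain ⟨M, hMpos, hMall⟩ : ∃ M : ℕ, 0 < M ∧ ∀ p q, 0 < (W ^ M) p q := by
    choose f hf using hconn
    refine ⟨(Finset.univ.sup fun pq : Fin N × Fin N => f pq.1 pq.2) + 1,
      Nat.succ_pos _, fun p q => ?_⟩
    refine hmono p q (f p q) _ ?_ (hf p q)
    exact le_trans (Finset.le_sup (f := fun pq : Fin N × Fin N => f pq.1 pq.2)
      (Finset.mem_univ (p, q))) (Nat.le_succ _)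
  set δ : ℝ := Finset.univ.inf' Finset.univ_nonempty
      (fun pq : Fin N × Fin N => (W ^ M) pq.1 pq.2) with hδdef
  have hδpos : 0 < δ := (Finset.lt_inf'_iff _).mpr fun b _ => hMall b.1 b.2
  have hδle : ∀ p q, δ ≤ (W ^ M) p q := fun p q =>
    Finset.inf'_le _ (Finset.mem_univ (p, q))
  set c : ℝ := 1 - N * δ with hcdef
  have hc0 : 0 ≤ c := by
    have : (N : ℝ) * δ = ∑ q : Fin N, δ := by
      rw [Finset.sum_const, Finset.card_univ, Fintype.card_fin, nsmul_eq_mul]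
    have h2 : (N : ℝ) * δ ≤ 1 := by
      rw [this, ← hrow' M i]
      exact Finset.sum_le_sum fun q _ => hδle i q
    simp [hcdef]; linarith
  have hc1 : c < 1 := by
    have : 0 < (N : ℝ) * δ := mul_pos hNR hδpos
    simp [hcdef]; linarith
  -- the column vector sequence
  set u : ℕ → Fin N → ℝ := fun L p => (W ^ L) p j with hu
  set s : ℕ → ℝ := fun L => Finset.univ.sup' Finset.univ_nonempty (u L)
      - Finset.univ.inf' Finset.univ_nonempty (u L) with hs
  have humul : ∀ (m L : ℕ), u (m + L) = (W ^ m).mulVec (u L) := by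
    intro m L
    funext p
    simp only [hu, Matrix.mulVec, dotProduct, pow_add, Matrix.mul_apply]
  have s_nonneg : ∀ L, 0 ≤ s L := by
    intro L
    have h1 : Finset.univ.inf' Finset.univ_nonempty (u L) ≤ u L i :=
      Finset.inf'_le _ (Finset.mem_univ i)
    have h2 : u L i ≤ Finset.univ.sup' Finset.univ_nonempty (u L) :=
      Finset.le_sup' _ (Finset.mem_univ i)
    simp only [hs]; linarith
  have s_succ : ∀ L, s (L + 1) ≤ s L := by
    intro L
    have h1 : u (L + 1) = W.mulVec (u L) := by
      rw [add_comm]; simpa [pow_one] using humul 1 L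
    have := osc_contract W 0 le_rfl (fun p q => hnonneg p q) hrow (u L)
    rw [← h1] at this
    simpa [hs] using this
  have s_anti : ∀ m m', m ≤ m' → s m' ≤ s m := by
    intro m m' h
    induction m', h using Nat.le_induction with
    | base => exact le_rfl
    | succ k hk ih => exact le_trans (s_succ k) ih
  have s_contract : ∀ L, s (M + L) ≤ c * s L := by
    intro L
    have h1 : u (M + L) = (W ^ M).mulVec (u L) := humul M L
    have := osc_contract (W ^ M) δ hδpos.le hδle (hrow' M) (u L)
    rw [← h1] at this
    simpa [hs, hcdef] using this
  have s_pow : ∀ k, s (M * k) ≤ c ^ k * s 0 := by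
    intro k
    induction k with
    | zero => simp
    | succ k ih =>
      have e : M * (k + 1) = M + M * k := by ring
      rw [e]
      calc s (M + M * k) ≤ c * s (M * k) := s_contract (M * k)
        _ ≤ c * (c ^ k * s 0) := by
            exact mul_le_mul_of_nonneg_left ih hc0
        _ = c ^ (k + 1) * s 0 := by ring
  have s_le : ∀ L, s L ≤ c ^ (L / M) * s 0 := by
    intro L
    have h1 : M * (L / M) ≤ L := Nat.mul_div_le L M
    exact le_trans (s_anti _ _ h1) (s_pow (L / M))
  have hdiv : Tendsto (fun L : ℕ => L / M) atTop atTop :=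
    Filter.tendsto_atTop_atTop.mpr fun b =>
      ⟨b * M, fun L hL => (Nat.le_div_iff_mul_le hMpos).mpr hL⟩
  have hbound : Tendsto (fun L : ℕ => c ^ (L / M) * s 0) atTop (nhds 0) := by
    have h1 : Tendsto (fun L : ℕ => c ^ (L / M)) atTop (nhds 0) :=
      (tendsto_pow_atTop_nhds_zero_of_lt_one hc0 hc1).comp hdiv
    simpa using h1.mul_const (s 0)
  have s_tendsto : Tendsto s atTop (nhds 0) := squeeze_zero s_nonneg s_le hbound
  -- mean of each column is 1/N
  have hmean : ∀ L, |u L i - 1 / N| ≤ s L := by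
    intro L
    have hsum : ∑ p, u L p = 1 := hcol' L j
    have hinf : Finset.univ.inf' Finset.univ_nonempty (u L) ≤ 1 / N := by
      rw [le_div_iff₀ hNR]
      have : (Finset.univ.inf' Finset.univ_nonempty (u L)) * N
          = ∑ _p : Fin N, Finset.univ.inf' Finset.univ_nonempty (u L) := by
        rw [Finset.sum_const, Finset.card_univ, Fintype.card_fin, nsmul_eq_mul]; ring
      rw [this, ← hsum]
      exact Finset.sum_le_sum fun p _ => Finset.inf'_le _ (Finset.mem_univ p)
    have hsup : 1 / N ≤ Finset.univ.sup' Finset.univ_nonempty (u L) := by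
      rw [div_le_iff₀ hNR]
      have : (Finset.univ.sup' Finset.univ_nonempty (u L)) * N
          = ∑ _p : Fin N, Finset.univ.sup' Finset.univ_nonempty (u L) := by
        rw [Finset.sum_const, Finset.card_univ, Fintype.card_fin, nsmul_eq_mul]; ring
      rw [this, ← hsum]
      exact Finset.sum_le_sum fun p _ => Finset.le_sup' _ (Finset.mem_univ p)
    have h1 : Finset.univ.inf' Finset.univ_nonempty (u L) ≤ u L i :=
      Finset.inf'_le _ (Finset.mem_univ i)
    have h2 : u L i ≤ Finset.univ.sup' Finset.univ_nonempty (u L) :=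
      Finset.le_sup' _ (Finset.mem_univ i)
    rw [abs_le]
    constructor <;> simp only [hs] <;> linarith
  have : Tendsto (fun L => u L i) atTop (nhds (1 / N)) := by
    rw [tendsto_iff_dist_tendsto_zero]
    refine squeeze_zero (fun L => dist_nonneg) (fun L => ?_) s_tendsto
    rw [Real.dist_eq]
    exact hmean L
  exact this

end Markov

section MoreAux

lemma psd_diag_nonneg {k : Type*} [Fintype k] [DecidableEq k]
    {M : Matrix k k ℝ} (hM : M.PosSemidef) (p : k) : 0 ≤ M p p := by
  have h := hM.dotProduct_mulVec_nonneg (Pi.single p 1)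
  rw [star_trivial] at h
  simpa [mulVec_single, single_dotProduct] using h

lemma psd_sum {k : Type*} [Fintype k] [DecidableEq k] {ι : Type*} (s : Finset ι)
    (f : ι → Matrix k k ℝ) (hf : ∀ j ∈ s, (f j).PosSemidef) :
    (∑ j ∈ s, f j).PosSemidef :=
  Finset.sum_induction f (·.PosSemidef) (fun _ _ ha hb => ha.add hb) PosSemidef.zero hf

lemma matpow_entry_nonneg {N : ℕ} (W : Matrix (Fin N) (Fin N) ℝ)
    (h : ∀ p q, 0 ≤ W p q) (m : ℕ) (p q : Fin N) : 0 ≤ (W ^ m) p q := by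
  induction m generalizing p q with
  | zero => rw [pow_zero]; by_cases hpq : p = q <;> simp [Matrix.one_apply, hpq]
  | succ m ih =>
    rw [pow_succ, Matrix.mul_apply]
    exact Finset.sum_nonneg fun r _ => mul_nonneg (ih p r) (h r q)

end MoreAux

/-- Theorem 4 of the paper (case `ΔQ = 0`, asymptotic inequalities stated at the
limiting unit weights `aⱼ = 1`): (1) `ΔRⱼ ⪰ 0` for all `j` implies `Σ ⪯ Σᵗ ⪯ Σᶠ`;
(2) `ΔRⱼ ⪯ 0` for all `j` implies `Σᶠ ⪯ Σ ⪯ Σᵗ`; (3) `ΔRⱼ = 0` for all `j` implies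
`Σᶠ = Σ` for any nonnegative weights, and `Σ^{t(L)} − Σ^{(L)} → 0` entrywise as
`L → ∞`. -/
theorem stmt14 {n N : ℕ} (hn : 1 ≤ n) (hN : 1 ≤ N)
    (md : Fin N → ℕ) (hmd : ∀ j, 1 ≤ md j)
    (H : ∀ j, Matrix (Fin (md j)) (Fin n) ℝ)
    (R Ru : ∀ j, Matrix (Fin (md j)) (Fin (md j)) ℝ)
    (hRsymm : ∀ j, (R j).IsSymm) (hRusymm : ∀ j, (Ru j).IsSymm)
    (hR : ∀ j, (R j).PosDef) (hRu : ∀ j, (Ru j).PosDef)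
    (dR : ∀ j, Matrix (Fin (md j)) (Fin (md j)) ℝ)
    (hdR : ∀ j, dR j = Ru j - R j)
    (P : Matrix (Fin n) (Fin n) ℝ) (hPsymm : P.IsSymm) (hP : P.PosDef)
    (W : Matrix (Fin N) (Fin N) ℝ)
    (hnonneg : ∀ p q, 0 ≤ W p q)
    (hrow : ∀ p, ∑ q, W p q = 1)
    (hcol : ∀ q, ∑ p, W p q = 1)
    (hdiag : ∀ p, 0 < W p p)
    (hconn : ∀ p q, ∃ m : ℕ, 0 < (W ^ m) p q)
    (i : Fin N)
    (Phi Phif Phit Sig Sigf Sigt : (Fin N → ℝ) → Matrix (Fin n) (Fin n) ℝ)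
    (hPhi : ∀ a, Phi a = ∑ j, a j • ((H j)ᵀ * (R j)⁻¹ * H j))
    (hPhif : ∀ a, Phif a = ∑ j, a j • ((H j)ᵀ * (Ru j)⁻¹ * H j))
    (hPhit : ∀ a, Phit a =
      ∑ j, (a j) ^ 2 • ((H j)ᵀ * (Ru j)⁻¹ * R j * (Ru j)⁻¹ * H j))
    (hSig : ∀ a, Sig a = (P⁻¹ + Phi a)⁻¹)
    (hSigf : ∀ a, Sigf a = (P⁻¹ + Phif a)⁻¹)
    (hSigt : ∀ a, Sigt a = Sigf a * P⁻¹ * Sigf a + Sigf a * Phit a * Sigf a) :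
    ((∀ j, (dR j).PosSemidef) →
      (Sigt (fun _ => 1) - Sig (fun _ => 1)).PosSemidef ∧
      (Sigf (fun _ => 1) - Sigt (fun _ => 1)).PosSemidef) ∧
    ((∀ j, (-(dR j)).PosSemidef) →
      (Sig (fun _ => 1) - Sigf (fun _ => 1)).PosSemidef ∧
      (Sigt (fun _ => 1) - Sig (fun _ => 1)).PosSemidef) ∧
    ((∀ j, dR j = 0) →
      (∀ a : Fin N → ℝ, (∀ j, 0 ≤ a j) → Sigf a = Sig a) ∧
      (∀ p q, Tendsto
        (fun L : ℕ => (Sigt (fun j => (N : ℝ) * (W ^ L) i j)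
          - Sig (fun j => (N : ℝ) * (W ^ L) i j)) p q) atTop (nhds 0))) := by
  classical
  set Gm : ∀ j, Matrix (Fin n) (Fin n) ℝ := fun j => (H j)ᵀ * (R j)⁻¹ * H j with hGm
  set Fm : ∀ j, Matrix (Fin n) (Fin n) ℝ := fun j => (H j)ᵀ * (Ru j)⁻¹ * H j with hFm
  set Tm : ∀ j, Matrix (Fin n) (Fin n) ℝ :=
    fun j => (H j)ᵀ * (Ru j)⁻¹ * R j * (Ru j)⁻¹ * H j with hTm
  have hRdet : ∀ j, IsUnit (R j).det := fun j => (hR j).det_pos.ne'.isUnit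
  have hRudet : ∀ j, IsUnit (Ru j).det := fun j => (hRu j).det_pos.ne'.isUnit
  have hRinvs : ∀ j, ((R j)⁻¹)ᵀ = (R j)⁻¹ := fun j => psd_symm (hR j).inv.posSemidef
  have hRuinvs : ∀ j, ((Ru j)⁻¹)ᵀ = (Ru j)⁻¹ := fun j => psd_symm (hRu j).inv.posSemidef
  have hGpsd : ∀ j, (Gm j).PosSemidef := by
    intro j
    have := psd_conj (hR j).inv.posSemidef (H j)ᵀ
    rw [transpose_transpose] at this
    simpa only [hGm] using this
  have hFpsd : ∀ j, (Fm j).PosSemidef := by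
    intro j
    have := psd_conj (hRu j).inv.posSemidef (H j)ᵀ
    rw [transpose_transpose] at this
    simpa only [hFm] using this
  have hTpsd : ∀ j, (Tm j).PosSemidef := by
    intro j
    have := psd_conj (hR j).posSemidef ((H j)ᵀ * (Ru j)⁻¹)
    rw [transpose_mul, transpose_transpose, hRuinvs j] at this
    simpa only [hTm, Matrix.mul_assoc] using this
  have hApd : (P⁻¹ + ∑ j, Gm j).PosDef :=
    hP.inv.add_posSemidef (psd_sum _ _ fun j _ => hGpsd j)
  have hBpd : (P⁻¹ + ∑ j, Fm j).PosDef :=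
    hP.inv.add_posSemidef (psd_sum _ _ fun j _ => hFpsd j)
  set A : Matrix (Fin n) (Fin n) ℝ := P⁻¹ + ∑ j, Gm j with hA
  set B : Matrix (Fin n) (Fin n) ℝ := P⁻¹ + ∑ j, Fm j with hB
  set S : Matrix (Fin n) (Fin n) ℝ := A⁻¹ with hSdef
  set K : Matrix (Fin n) (Fin n) ℝ := B⁻¹ with hKdef
  have hSs : Sᵀ = S := psd_symm hApd.inv.posSemidef
  have hKs : Kᵀ = K := psd_symm hBpd.inv.posSemidef
  have hSA : S * A = 1 := Matrix.nonsing_inv_mul A hApd.det_pos.ne'.isUnit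
  have hKB : K * B = 1 := Matrix.nonsing_inv_mul B hBpd.det_pos.ne'.isUnit
  have hBK : B * K = 1 := Matrix.mul_nonsing_inv B hBpd.det_pos.ne'.isUnit
  have one1 : Phi (fun _ => 1) = ∑ j, Gm j := by rw [hPhi]; simp [hGm]
  have one2 : Phif (fun _ => 1) = ∑ j, Fm j := by rw [hPhif]; simp [hFm]
  have one3 : Phit (fun _ => 1) = ∑ j, Tm j := by rw [hPhit]; simp [hTm]
  have hSig1 : Sig (fun _ => 1) = S := by rw [hSig, one1, ← hA, ← hSdef]
  have hSigf1 : Sigf (fun _ => 1) = K := by rw [hSigf, one2, ← hB, ← hKdef]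
  have hSigt1 : Sigt (fun _ => 1) = K * P⁻¹ * K + K * (∑ j, Tm j) * K := by
    rw [hSigt, hSigf1, one3]
  -- the unconditional inequality Σ ⪯ Σᵗ
  have claim1 : (Sigt (fun _ => 1) - Sig (fun _ => 1)).PosSemidef := by
    set X : ∀ j, Matrix (Fin n) (Fin (md j)) ℝ :=
      fun j => K * (H j)ᵀ * (Ru j)⁻¹ - S * (H j)ᵀ * (R j)⁻¹ with hX
    have hterm : ∀ j, X j * R j * (X j)ᵀ
        = K * Tm j * K - K * Fm j * S - S * Fm j * K + S * Gm j * S := by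
      intro j
      have hXT : (X j)ᵀ = (Ru j)⁻¹ * (H j * K) - (R j)⁻¹ * (H j * S) := by
        simp only [hX, transpose_sub, transpose_mul, transpose_transpose,
          hRuinvs j, hRinvs j, hKs, hSs, Matrix.mul_assoc]
      have cancRR : ∀ Z : Matrix (Fin (md j)) (Fin n) ℝ, R j * ((R j)⁻¹ * Z) = Z :=
        fun Z => Matrix.mul_nonsing_inv_cancel_left _ Z (hRdet j)
      have cancRR' : ∀ Z : Matrix (Fin (md j)) (Fin n) ℝ, (R j)⁻¹ * (R j * Z) = Z :=
        fun Z => Matrix.nonsing_inv_mul_cancel_left _ Z (hRdet j)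
      rw [hXT]
      simp only [hX, hTm, hFm, hGm, Matrix.sub_mul, Matrix.mul_sub, Matrix.mul_assoc,
        cancRR, cancRR']
      abel
    have hsum : ∑ j, X j * R j * (X j)ᵀ
        = K * (∑ j, Tm j) * K - K * (∑ j, Fm j) * S
          - S * (∑ j, Fm j) * K + S * (∑ j, Gm j) * S := by
      rw [Finset.sum_congr rfl fun j _ => hterm j]
      simp only [Finset.sum_add_distrib, Finset.sum_sub_distrib,
        ← Finset.sum_mul, ← Finset.mul_sum]
    have c1 : K * P⁻¹ * S + K * (∑ j, Fm j) * S = S := by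
      rw [← Matrix.add_mul, ← Matrix.mul_add, ← hB, hKB, Matrix.one_mul]
    have c2 : S * P⁻¹ * K + S * (∑ j, Fm j) * K = S := by
      rw [← Matrix.add_mul, ← Matrix.mul_add, ← hB, Matrix.mul_assoc, hBK, Matrix.mul_one]
    have c3 : S * P⁻¹ * S + S * (∑ j, Gm j) * S = S := by
      rw [← Matrix.add_mul, ← Matrix.mul_add, ← hA, hSA, Matrix.one_mul]
    have expand : (K - S) * P⁻¹ * (K - S)
          + (K * (∑ j, Tm j) * K - K * (∑ j, Fm j) * S - S * (∑ j, Fm j) * K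
            + S * (∑ j, Gm j) * S)
        = K * P⁻¹ * K + K * (∑ j, Tm j) * K
          - (K * P⁻¹ * S + K * (∑ j, Fm j) * S)
          - (S * P⁻¹ * K + S * (∑ j, Fm j) * K)
          + (S * P⁻¹ * S + S * (∑ j, Gm j) * S) := by
      simp only [Matrix.sub_mul, Matrix.mul_sub]
      abel
    have hid : Sigt (fun _ => 1) - Sig (fun _ => 1)
        = (K - S) * P⁻¹ * (K - S)ᵀ + ∑ j, X j * R j * (X j)ᵀ := by
      rw [hSigt1, hSig1, hsum, transpose_sub, hKs, hSs, expand, c1, c2, c3]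
      abel
    rw [hid]
    refine PosSemidef.add ?_ (psd_sum _ _ fun j _ => psd_conj (hR j).posSemidef (X j))
    exact psd_conj hP.inv.posSemidef (K - S)
  refine ⟨?_, ?_, ?_⟩
  · -- part (1)
    intro hdRpsd
    refine ⟨claim1, ?_⟩
    set Y : ∀ j, Matrix (Fin n) (Fin (md j)) ℝ := fun j => K * (H j)ᵀ * (Ru j)⁻¹ with hY
    have hterm : ∀ j, Y j * dR j * (Y j)ᵀ = K * Fm j * K - K * Tm j * K := by
      intro j
      have hYT : (Y j)ᵀ = (Ru j)⁻¹ * (H j * K) := by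
        simp only [hY, transpose_mul, transpose_transpose, hRuinvs j, hKs,
          Matrix.mul_assoc]
      have cancRu : ∀ Z : Matrix (Fin (md j)) (Fin n) ℝ, Ru j * ((Ru j)⁻¹ * Z) = Z :=
        fun Z => Matrix.mul_nonsing_inv_cancel_left _ Z (hRudet j)
      rw [hYT, hdR j]
      simp only [hY, hFm, hTm, Matrix.sub_mul, Matrix.mul_sub, Matrix.mul_assoc, cancRu]
    have hKK : K * P⁻¹ * K + K * (∑ j, Fm j) * K = K := by
      rw [← Matrix.add_mul, ← Matrix.mul_add, ← hB, Matrix.mul_assoc, hBK, Matrix.mul_one]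
    have e1 : ∑ j, (K * Fm j * K - K * Tm j * K)
        = K * (∑ j, Fm j) * K - K * (∑ j, Tm j) * K := by
      rw [Finset.sum_sub_distrib, ← Finset.sum_mul, ← Finset.mul_sum,
        ← Finset.sum_mul, ← Finset.mul_sum]
    have hid : Sigf (fun _ => 1) - Sigt (fun _ => 1) = ∑ j, Y j * dR j * (Y j)ᵀ := by
      rw [Finset.sum_congr rfl fun j _ => hterm j, e1, hSigf1, hSigt1]
      nth_rewrite 1 [← hKK]
      abel
    rw [hid]
    exact psd_sum _ _ fun j _ => psd_conj (hdRpsd j) (Y j)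
  · -- part (2)
    intro hdRneg
    refine ⟨?_, claim1⟩
    have hinv : ∀ j, ((Ru j)⁻¹ - (R j)⁻¹).PosSemidef := by
      intro j
      refine inv_sub_inv_psd (hRu j) (hR j) ?_
      have := hdRneg j
      rwa [hdR j, neg_sub] at this
    have hBA : (B - A).PosSemidef := by
      have hBAe : B - A = ∑ j, (Fm j - Gm j) := by
        rw [Finset.sum_sub_distrib, hA, hB]
        abel
      rw [hBAe]
      refine psd_sum _ _ fun j _ => ?_
      have h1 : Fm j - Gm j = (H j)ᵀ * ((Ru j)⁻¹ - (R j)⁻¹) * ((H j)ᵀ)ᵀ := by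
        simp only [hFm, hGm, transpose_transpose, Matrix.mul_sub, Matrix.sub_mul]
      rw [h1]
      exact psd_conj (hinv j) (H j)ᵀ
    have := inv_sub_inv_psd hApd hBpd hBA
    rw [hSig1, hSigf1]
    exact this
  · -- part (3)
    intro hdR0
    have hRuR : ∀ j, Ru j = R j := fun j => sub_eq_zero.mp (by rw [← hdR j, hdR0 j])
    have hPhif' : ∀ a, Phif a = Phi a := by
      intro a
      rw [hPhif, hPhi]
      exact Finset.sum_congr rfl fun j _ => by simp only [hFm, hGm, hRuR j]
    refine ⟨fun a _ => by rw [hSigf, hSig, hPhif' a], ?_⟩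
    have hPhit' : ∀ a, Phit a = ∑ j, (a j) ^ 2 • Gm j := by
      intro a
      rw [hPhit]
      refine Finset.sum_congr rfl fun j _ => ?_
      simp only [hTm, hGm, hRuR j]
      rw [Matrix.nonsing_inv_mul_cancel_right _ _ (hRdet j)]
    intro p q
    set C : ℝ := ∑ r, P r r with hC
    have hPdiag : ∀ r, 0 ≤ P r r := fun r => psd_diag_nonneg hP.posSemidef r
    have hdiagC : ∀ r, P r r ≤ C := fun r =>
      Finset.single_le_sum (fun t _ => hPdiag t) (Finset.mem_univ r)
    have haG : ∀ a : Fin N → ℝ, (∀ j, 0 ≤ a j) → (∑ j, a j • Gm j).PosSemidef :=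
      fun a ha => psd_sum _ _ fun j _ => psd_smul (hGpsd j) (ha j)
    have hMapd : ∀ a : Fin N → ℝ, (∀ j, 0 ≤ a j) → (P⁻¹ + ∑ j, a j • Gm j).PosDef :=
      fun a ha => hP.inv.add_posSemidef (haG a ha)
    -- the error identity
    have key : ∀ a : Fin N → ℝ, (∀ j, 0 ≤ a j) →
        Sigt a - Sig a = (P⁻¹ + ∑ j, a j • Gm j)⁻¹ * (∑ j, ((a j) ^ 2 - a j) • Gm j)
          * (P⁻¹ + ∑ j, a j • Gm j)⁻¹ := by
      intro a ha
      have hphia : Phi a = ∑ j, a j • Gm j := by rw [hPhi]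
      set Sa := (P⁻¹ + ∑ j, a j • Gm j)⁻¹ with hSa
      have hSiga : Sig a = Sa := by rw [hSig, hphia, hSa]
      have hSigfa : Sigf a = Sa := by rw [hSigf, hPhif' a, hphia, hSa]
      have hSA' : Sa * (P⁻¹ + ∑ j, a j • Gm j) = 1 :=
        Matrix.nonsing_inv_mul _ (hMapd a ha).det_pos.ne'.isUnit
      have hSaexp : Sa * P⁻¹ * Sa + Sa * Phi a * Sa = Sa := by
        rw [← Matrix.add_mul, ← Matrix.mul_add, hphia, hSA', Matrix.one_mul]
      have hsub : Phit a - Phi a = ∑ j, ((a j) ^ 2 - a j) • Gm j := by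
        rw [hPhit' a, hphia, ← Finset.sum_sub_distrib]
        exact Finset.sum_congr rfl fun j _ => (sub_smul _ _ _).symm
      rw [hSigt, hSigfa, hSiga]
      calc Sa * P⁻¹ * Sa + Sa * Phit a * Sa - Sa
          = Sa * P⁻¹ * Sa + Sa * Phit a * Sa
            - (Sa * P⁻¹ * Sa + Sa * Phi a * Sa) := by rw [hSaexp]
        _ = Sa * Phit a * Sa - Sa * Phi a * Sa := by abel
        _ = Sa * (Phit a - Phi a) * Sa := by rw [Matrix.mul_sub, Matrix.sub_mul]
        _ = Sa * (∑ j, ((a j) ^ 2 - a j) • Gm j) * Sa := by rw [hsub]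
    -- uniform entry bound for the posterior covariance
    have hSabound : ∀ a : Fin N → ℝ, (∀ j, 0 ≤ a j) → ∀ r s,
        |(P⁻¹ + ∑ j, a j • Gm j)⁻¹ r s| ≤ C := by
      intro a ha r s
      have hpd := hMapd a ha
      have h1 : (P - (P⁻¹ + ∑ j, a j • Gm j)⁻¹).PosSemidef := by
        have h2 : ((P⁻¹ + ∑ j, a j • Gm j) - P⁻¹).PosSemidef := by
          have : (P⁻¹ + ∑ j, a j • Gm j) - P⁻¹ = ∑ j, a j • Gm j := by abel
          rw [this]; exact haG a ha
        have := inv_sub_inv_psd hP.inv hpd h2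
        rwa [Matrix.nonsing_inv_nonsing_inv P hP.det_pos.ne'.isUnit] at this
      have h2 := psd_entry_abs_le hpd.inv.posSemidef r s
      have h3 : (P⁻¹ + ∑ j, a j • Gm j)⁻¹ r r ≤ P r r := by
        have h4 := psd_diag_nonneg h1 r
        simp only [Matrix.sub_apply] at h4
        linarith
      have h5 : (P⁻¹ + ∑ j, a j • Gm j)⁻¹ s s ≤ P s s := by
        have h4 := psd_diag_nonneg h1 s
        simp only [Matrix.sub_apply] at h4
        linarith
      have h6 := hdiagC r
      have h7 := hdiagC s
      linarith
    -- the weight sequence and its convergence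
    set aL : ℕ → Fin N → ℝ := fun L j' => (N : ℝ) * (W ^ L) i j' with haL
    have haLnn : ∀ L j', 0 ≤ aL L j' := fun L j' =>
      mul_nonneg (Nat.cast_nonneg N) (matpow_entry_nonneg W hnonneg L i j')
    have hN0 : (N : ℝ) ≠ 0 := by positivity
    have haLt : ∀ j', Tendsto (fun L => aL L j') atTop (nhds 1) := by
      intro j'
      have h0 := markov_conv hN W hnonneg hrow hcol hdiag hconn i j'
      have h1 := h0.const_mul (N : ℝ)
      rw [mul_one_div, div_self hN0] at h1
      exact h1
    -- entrywise convergence of the middle factor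
    have hDt : ∀ r s, Tendsto (fun L => ∑ j, ((aL L j) ^ 2 - aL L j) * Gm j r s)
        atTop (nhds 0) := by
      intro r s
      have h1 : ∀ j : Fin N, Tendsto (fun L => ((aL L j) ^ 2 - aL L j) * Gm j r s)
          atTop (nhds (((1:ℝ) ^ 2 - 1) * Gm j r s)) :=
        fun j => (((haLt j).pow 2).sub (haLt j)).mul_const (Gm j r s)
      have h2 := tendsto_finset_sum Finset.univ fun j (_ : j ∈ Finset.univ) => h1 j
      simpa using h2
    -- squeeze
    refine squeeze_zero_norm (a := fun L =>
      ∑ s, ∑ r, C * |∑ j, ((aL L j) ^ 2 - aL L j) * Gm j r s| * C) ?_ ?_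
    · intro L
      have hkey := key (aL L) (haLnn L)
      rw [Real.norm_eq_abs]
      have : (Sigt (aL L) - Sig (aL L)) p q = ((Sigt (fun j => (N : ℝ) * (W ^ L) i j)
          - Sig (fun j => (N : ℝ) * (W ^ L) i j)) p q) := by rw [haL]
      rw [← this, hkey]
      set Sa := (P⁻¹ + ∑ j, aL L j • Gm j)⁻¹ with hSa
      set D := ∑ j, ((aL L j) ^ 2 - aL L j) • Gm j with hD
      have hentry : (Sa * D * Sa) p q = ∑ s, ∑ r, Sa p r * D r s * Sa s q := by
        simp only [Matrix.mul_apply, Finset.sum_mul]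
      have hDapp : ∀ r s, D r s = ∑ j, ((aL L j) ^ 2 - aL L j) * Gm j r s := by
        intro r s
        rw [hD, Matrix.sum_apply]
        exact Finset.sum_congr rfl fun j _ => by rw [Matrix.smul_apply, smul_eq_mul]
      rw [hentry]
      calc |∑ s, ∑ r, Sa p r * D r s * Sa s q|
          ≤ ∑ s, |∑ r, Sa p r * D r s * Sa s q| := Finset.abs_sum_le_sum_abs _ _
        _ ≤ ∑ s, ∑ r, |Sa p r * D r s * Sa s q| :=
            Finset.sum_le_sum fun s _ => Finset.abs_sum_le_sum_abs _ _
        _ ≤ ∑ s, ∑ r, C * |D r s| * C := by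
            refine Finset.sum_le_sum fun s _ => Finset.sum_le_sum fun r _ => ?_
            rw [abs_mul, abs_mul]
            have b1 := hSabound (aL L) (haLnn L) p r
            have b2 := hSabound (aL L) (haLnn L) s q
            rw [← hSa] at b1 b2
            have hC0 : 0 ≤ C := Finset.sum_nonneg fun t _ => hPdiag t
            exact mul_le_mul (mul_le_mul_of_nonneg_right b1 (abs_nonneg _)) b2
              (abs_nonneg _) (mul_nonneg hC0 (abs_nonneg _))
        _ = ∑ s, ∑ r, C * |∑ j, ((aL L j) ^ 2 - aL L j) * Gm j r s| * C := by
            exact Finset.sum_congr rfl fun s _ => Finset.sum_congr rfl fun r _ => by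
              rw [hDapp]
    · have h := tendsto_finset_sum (Finset.univ (α := Fin n)) fun s (_ : s ∈ Finset.univ) =>
        tendsto_finset_sum (Finset.univ (α := Fin n)) fun r (_ : r ∈ Finset.univ) =>
          (((hDt r s).abs.const_mul C).mul_const C)
      simpa using h
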